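/- For every L ≥ 0, every design (n_0, n_1, …, n_L) of positive integers, and every positive integer m, the maximal number of linear regions of a function computed by a ReLU network of design (n_0, …, n_L, m) equals the maximal number of linear regions of a function computed by a ReLU network of design (n_0, …, n_L, 1); that is, R(n_0, …, n_L, m) = R(n_0, …, n_L, 1). -/

import Mathlib

open scoped BigOperators
open MeasureTheory

noncomputable section

/-- The ReLU activation function. -/
def relu (x : ℝ) : ℝ := max x 0

/-- `f : ℝ^n → ℝ^m` is an affine map. -/
def IsAffineMap {n m : ℕ} (f : (Fin n → ℝ) → Fin m → ℝ) : Prop :=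
  ∃ (A : Matrix (Fin m) (Fin n) ℝ) (b : Fin m → ℝ),
    ∀ x i, f x i = (∑ j, A i j * x j) + b i

/-- `f : ℝ^n → ℝ^m` is an affine map all of whose coefficients have absolute value ≤ c. -/
def IsAffineMapB (c : ℝ) {n m : ℕ} (f : (Fin n → ℝ) → Fin m → ℝ) : Prop :=
  ∃ (A : Matrix (Fin m) (Fin n) ℝ) (b : Fin m → ℝ),
    (∀ i j, |A i j| ≤ c) ∧ (∀ i, |b i| ≤ c) ∧ ∀ x i, f x i = (∑ j, A i j * x j) + b i

/-- `ComputesA ρ n hidden m f` : `f` is computed by a feedforward network with activation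
function `ρ`, input dimension `n`, hidden layer widths `hidden` and output dimension `m`. -/
inductive ComputesA (ρ : ℝ → ℝ) :
    ∀ (n : ℕ), List ℕ → ∀ (m : ℕ), ((Fin n → ℝ) → Fin m → ℝ) → Prop
  | nil {n m : ℕ} (f : (Fin n → ℝ) → Fin m → ℝ) (hf : IsAffineMap f) :
      ComputesA ρ n [] m f
  | cons {n w m : ℕ} {ws : List ℕ} (f₀ : (Fin n → ℝ) → Fin w → ℝ)
      (g : (Fin w → ℝ) → Fin m → ℝ) (hf : IsAffineMap f₀)
      (hg : ComputesA ρ w ws m g) :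
      ComputesA ρ n (w :: ws) m (fun x => g (fun i => ρ (f₀ x i)))

/-- Same as `ComputesA` but all coefficients of all affine maps are bounded by `c`. -/
inductive ComputesAB (ρ : ℝ → ℝ) (c : ℝ) :
    ∀ (n : ℕ), List ℕ → ∀ (m : ℕ), ((Fin n → ℝ) → Fin m → ℝ) → Prop
  | nil {n m : ℕ} (f : (Fin n → ℝ) → Fin m → ℝ) (hf : IsAffineMapB c f) :
      ComputesAB ρ c n [] m f
  | cons {n w m : ℕ} {ws : List ℕ} (f₀ : (Fin n → ℝ) → Fin w → ℝ)
      (g : (Fin w → ℝ) → Fin m → ℝ) (hf : IsAffineMapB c f₀)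
      (hg : ComputesAB ρ c w ws m g) :
      ComputesAB ρ c n (w :: ws) m (fun x => g (fun i => ρ (f₀ x i)))

/-- `f` is computed by a ReLU network of design `(n, hidden…, m)`. -/
def Computes (n : ℕ) (hidden : List ℕ) (m : ℕ) (f : (Fin n → ℝ) → Fin m → ℝ) : Prop :=
  ComputesA relu n hidden m f

/-- `R` is a linear region of `f` : an open connected set on which `f` is affine,
maximal in the sense that `f` is not affine on any strictly larger open set. -/
def IsLinearRegion {n m : ℕ} (f : (Fin n → ℝ) → Fin m → ℝ) (R : Set (Fin n → ℝ)) : Prop :=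
  IsOpen R ∧ IsConnected R ∧ (∃ g, IsAffineMap g ∧ Set.EqOn f g R) ∧
    ∀ R' : Set (Fin n → ℝ), IsOpen R' → R ⊂ R' →
      ¬ ∃ g, IsAffineMap g ∧ Set.EqOn f g R'

/-- The number of linear regions of `f`. -/
def numRegions {n m : ℕ} (f : (Fin n → ℝ) → Fin m → ℝ) : ℕ :=
  {R | IsLinearRegion f R}.ncard

/-- `R(n, hidden…, m)` : the maximal number of linear regions of a function computed by a
ReLU network of design `(n, hidden…, m)`. -/
def maxRegions (n : ℕ) (hidden : List ℕ) (m : ℕ) : ℕ :=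
  sSup {k | ∃ f : (Fin n → ℝ) → Fin m → ℝ, Computes n hidden m f ∧ numRegions f = k}

/-- `f` is piecewise affine: continuous, finitely many linear regions, whose closures cover. -/
def IsPiecewiseAffine {n m : ℕ} (f : (Fin n → ℝ) → Fin m → ℝ) : Prop :=
  Continuous f ∧ {R | IsLinearRegion f R}.Finite ∧
    (⋃ R ∈ {R | IsLinearRegion f R}, closure R) = Set.univ

/-! ### Auxiliary lemmas -/

lemma affine_comp {n m p : ℕ} {f : (Fin n → ℝ) → Fin m → ℝ} {g : (Fin m → ℝ) → Fin p → ℝ}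
    (hf : IsAffineMap f) (hg : IsAffineMap g) : IsAffineMap (fun x => g (f x)) := by
  obtain ⟨A, b, hA⟩ := hf
  obtain ⟨B, c, hB⟩ := hg
  refine ⟨fun i k => ∑ j, B i j * A j k, fun i => (∑ j, B i j * b j) + c i, fun x i => ?_⟩
  show g (f x) i = _
  rw [hB]
  simp only [hA, mul_add, Finset.sum_add_distrib, Finset.mul_sum]
  rw [Finset.sum_comm]
  have : ∀ j ∈ Finset.univ, (∑ k, B i k * (A k j * x j)) = (∑ k, B i k * A k j) * x j := by
    intro j _
    rw [Finset.sum_mul]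
    exact Finset.sum_congr rfl fun k _ => by ring
  rw [Finset.sum_congr rfl this]
  ring

lemma affine_id {n : ℕ} : IsAffineMap (fun x : Fin n → ℝ => x) := by
  classical
  refine ⟨fun i j => if j = i then 1 else 0, fun _ => 0, fun x i => ?_⟩
  simp only [ite_mul, one_mul, zero_mul, add_zero]
  rw [Finset.sum_ite_eq' Finset.univ i x, if_pos (Finset.mem_univ i)]

lemma affine_continuous {n m : ℕ} {f : (Fin n → ℝ) → Fin m → ℝ} (hf : IsAffineMap f) :
    Continuous f := by
  obtain ⟨A, b, hA⟩ := hf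
  apply continuous_pi
  intro i
  have : (fun x => f x i) = fun x => (∑ j, A i j * x j) + b i := funext fun x => hA x i
  rw [this]
  exact (continuous_finset_sum _ fun j _ => continuous_const.mul (continuous_apply j)).add
    continuous_const

lemma aff_coord_zero {k : ℕ} {a : Fin k → ℝ} {b : ℝ} {U : Set (Fin k → ℝ)}
    (hU : IsOpen U) (hne : U.Nonempty)
    (h : ∀ x ∈ U, (∑ j, a j * x j) + b = 0) : (∀ j, a j = 0) ∧ b = 0 := by
  obtain ⟨x₀, hx₀⟩ := hne
  obtain ⟨ε, hε, hball⟩ := Metric.isOpen_iff.mp hU x₀ hx₀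
  have haj : ∀ j, a j = 0 := by
    intro j
    set x₁ : Fin k → ℝ := fun j' => if j' = j then x₀ j + ε/2 else x₀ j' with hx₁def
    have hx₁ : x₁ ∈ U := by
      apply hball
      rw [Metric.mem_ball, dist_pi_lt_iff hε]
      intro i
      simp only [hx₁def, Real.dist_eq]
      rcases eq_or_ne i j with rfl | hij
      · rw [if_pos rfl]
        have : x₀ i + ε / 2 - x₀ i = ε/2 := by ring
        rw [this, abs_of_pos (by linarith)]; linarith
      · simp [hij, hε]
    have h1 := h _ hx₁
    have h0 := h _ hx₀
    have hsum : (∑ j', a j' * x₁ j') = (∑ j', a j' * x₀ j') + a j * (ε/2) := by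
      simp only [hx₁def, mul_ite, mul_add]
      have heach : ∀ x : Fin k, (if x = j then a x * x₀ j + a x * (ε/2) else a x * x₀ x)
          = a x * x₀ x + (if x = j then a x * (ε/2) else 0) := by
        intro x
        split
        · next hxj => subst hxj; ring
        · ring
      rw [Finset.sum_congr rfl (fun x _ => heach x), Finset.sum_add_distrib,
        Finset.sum_ite_eq' Finset.univ j (fun x => a x * (ε/2))]
      simp
    rw [hsum] at h1
    have : a j * (ε/2) = 0 := by linarith
    have hε2 : (ε/2) ≠ 0 := by positivity
    exact (mul_eq_zero.mp this).resolve_right hε2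
  refine ⟨haj, ?_⟩
  have := h _ hx₀
  simp only [haj, zero_mul, Finset.sum_const_zero, zero_add] at this
  exact this

/-- Two affine maps agreeing on a nonempty open set are equal. -/
lemma affine_eq_of_eqOn {n m : ℕ} {f g : (Fin n → ℝ) → Fin m → ℝ}
    (hf : IsAffineMap f) (hg : IsAffineMap g) {U : Set (Fin n → ℝ)}
    (hU : IsOpen U) (hne : U.Nonempty) (h : Set.EqOn f g U) : f = g := by
  obtain ⟨A, b, hA⟩ := hf
  obtain ⟨B, c, hB⟩ := hg
  funext x i
  have key := aff_coord_zero (a := fun j => A i j - B i j) (b := b i - c i) hU hne ?_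
  · rw [hA, hB]
    have h1 : ∀ j, A i j * x j = B i j * x j := by
      intro j
      have hj : A i j - B i j = 0 := key.1 j
      have : A i j = B i j := by linarith
      rw [this]
    have h2 : b i = c i := by have := key.2; linarith
    rw [Finset.sum_congr rfl (fun j _ => h1 j), h2]
  · intro y hy
    have := congrFun (h hy) i
    rw [hA, hB] at this
    simp only [sub_mul, Finset.sum_sub_distrib]
    linarith

lemma relu_continuous : Continuous relu := continuous_id.max continuous_const

lemma computes_continuous {n : ℕ} {ws : List ℕ} {m : ℕ}
    {f : (Fin n → ℝ) → Fin m → ℝ} (h : ComputesA relu n ws m f) : Continuous f := by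
  induction h with
  | nil f hf => exact affine_continuous hf
  | cons f₀ g hf hg ih =>
    exact ih.comp (continuous_pi fun i =>
      relu_continuous.comp ((continuous_apply i).comp (affine_continuous hf)))

lemma computes_postcomp {ρ : ℝ → ℝ} {n : ℕ} {ws : List ℕ} {m p : ℕ}
    {f : (Fin n → ℝ) → Fin m → ℝ} (h : ComputesA ρ n ws m f)
    {E : (Fin m → ℝ) → Fin p → ℝ} (hE : IsAffineMap E) :
    ComputesA ρ n ws p (fun x => E (f x)) := by
  induction h with
  | nil f hf => exact ComputesA.nil _ (affine_comp hf hE)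
  | cons f₀ g hf hg ih => exact ComputesA.cons f₀ (fun y => E (g y)) hf (ih hE)

lemma regions_eq {n m p : ℕ} {f : (Fin n → ℝ) → Fin m → ℝ} {g : (Fin n → ℝ) → Fin p → ℝ}
    (h : ∀ U : Set (Fin n → ℝ), IsOpen U →
      ((∃ F, IsAffineMap F ∧ Set.EqOn f F U) ↔ (∃ G, IsAffineMap G ∧ Set.EqOn g G U))) :
    {R | IsLinearRegion f R} = {R | IsLinearRegion g R} := by
  have key : ∀ {m' p' : ℕ} (f' : (Fin n → ℝ) → Fin m' → ℝ) (g' : (Fin n → ℝ) → Fin p' → ℝ),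
      (∀ U : Set (Fin n → ℝ), IsOpen U →
        ((∃ F, IsAffineMap F ∧ Set.EqOn f' F U) ↔ (∃ G, IsAffineMap G ∧ Set.EqOn g' G U))) →
      ∀ R, IsLinearRegion f' R → IsLinearRegion g' R := by
    intro m' p' f' g' h' R hR
    obtain ⟨hopen, hconn, haff, hmax⟩ := hR
    refine ⟨hopen, hconn, (h' R hopen).mp haff, fun R' hR' hss hex => ?_⟩
    exact hmax R' hR' hss ((h' R' hR').mpr hex)
  ext R
  exact ⟨fun hR => key f g h R hR, fun hR => key g f (fun U hU => (h U hU).symm) R hR⟩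

/-- The "pattern" map zeroing out coordinates where `s` is false. -/
def patMap {w : ℕ} (s : Fin w → Bool) : (Fin w → ℝ) → Fin w → ℝ :=
  fun y i => if s i then y i else 0

lemma patMap_affine {w : ℕ} (s : Fin w → Bool) : IsAffineMap (patMap s) := by
  classical
  refine ⟨fun i j => if s i then (if j = i then 1 else 0) else 0, fun _ => 0, fun y i => ?_⟩
  simp only [patMap, add_zero]
  by_cases h : s i
  · simp only [h, if_true, ite_mul, one_mul, zero_mul]
    rw [Finset.sum_ite_eq' Finset.univ i y, if_pos (Finset.mem_univ i)]
  · simp [h]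

/-- KEY: candidates for the affine pieces of a ReLU network, along every affine slice. -/
lemma key_candidates {w : ℕ} {ws : List ℕ} {m : ℕ} {g : (Fin w → ℝ) → Fin m → ℝ}
    (h : ComputesA relu w ws m g) :
    ∃ 𝒜 : Set ((Fin w → ℝ) → Fin m → ℝ), 𝒜.Finite ∧ (∀ ψ ∈ 𝒜, IsAffineMap ψ) ∧
      ∀ (k : ℕ) (φ : (Fin k → ℝ) → Fin w → ℝ), IsAffineMap φ →
        ∃ D : Set (Fin k → ℝ), IsOpen D ∧ Dense D ∧
          ∀ x ∈ D, ∃ ψ ∈ 𝒜, ∃ U : Set (Fin k → ℝ), IsOpen U ∧ x ∈ U ∧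
            ∀ y ∈ U, g (φ y) = ψ (φ y) := by
  induction h with
  | nil f hf =>
    refine ⟨{f}, Set.finite_singleton f, by simpa using hf, fun k φ hφ => ?_⟩
    exact ⟨Set.univ, isOpen_univ, dense_univ,
      fun x _ => ⟨f, rfl, Set.univ, isOpen_univ, trivial, fun y _ => rfl⟩⟩
  | @cons n w m' ws' f₀ g' hf hg' ih =>
    obtain ⟨𝒜', h𝒜'fin, h𝒜'aff, hprop⟩ := ih
    -- candidates
    refine ⟨(fun p : (((Fin w → ℝ) → Fin m' → ℝ) × (Fin w → Bool)) =>
        (fun x => p.1 (patMap p.2 (f₀ x)))) '' (𝒜' ×ˢ Set.univ),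
      (h𝒜'fin.prod (Set.finite_univ)).image _, ?_, ?_⟩
    · rintro ψ ⟨⟨ψ', s⟩, ⟨hψ', -⟩, rfl⟩
      exact affine_comp (f := f₀) (g := fun y => ψ' (patMap s y)) hf
        (affine_comp (patMap_affine s) (h𝒜'aff ψ' hψ'))
    intro k φ hφ
    -- χ := f₀ ∘ φ, with data (M, c)
    set χ : (Fin k → ℝ) → Fin w → ℝ := fun t => f₀ (φ t) with hχdef
    obtain ⟨M, c, hMc⟩ : IsAffineMap χ := affine_comp hφ hf
    -- identically-zero coordinates
    classical
    -- D' from ih for each pattern s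
    have hDs : ∀ s : Fin w → Bool, ∃ D' : Set (Fin k → ℝ), IsOpen D' ∧ Dense D' ∧
        ∀ x ∈ D', ∃ ψ' ∈ 𝒜', ∃ U : Set (Fin k → ℝ), IsOpen U ∧ x ∈ U ∧
          ∀ y ∈ U, g' (patMap s (χ y)) = ψ' (patMap s (χ y)) :=
      fun s => hprop k (fun t => patMap s (χ t)) (affine_comp ⟨M, c, hMc⟩ (patMap_affine s))
    choose D' hD'open hD'dense hD'prop using hDs
    set Zi : Fin w → Prop := fun i => (∀ j, M i j = 0) ∧ c i = 0 with hZidef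
    have hZconst : ∀ i, Zi i → ∀ t, χ t i = 0 := by
      intro i hi t
      rw [hMc]
      simp [hi.1, hi.2]
    -- V s : pattern region
    set V : (Fin w → Bool) → Set (Fin k → ℝ) :=
      fun s => {t | ∀ i, if s i then 0 < χ t i else (χ t i < 0 ∨ Zi i)} with hVdef
    have hχcont : Continuous χ := affine_continuous ⟨M, c, hMc⟩
    have hχicont : ∀ i, Continuous fun t => χ t i := fun i => (continuous_apply i).comp hχcont
    have hVopen : ∀ s, IsOpen (V s) := by
      intro s
      have : V s = ⋂ i, {t | if s i then 0 < χ t i else (χ t i < 0 ∨ Zi i)} := by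
        ext t; simp [hVdef, Set.mem_iInter]
      rw [this]
      apply isOpen_iInter_of_finite
      intro i
      by_cases hsi : s i = true
      · simp only [hsi, if_true]
        exact isOpen_lt continuous_const (hχicont i)
      · have hif : {t | if s i = true then 0 < χ t i else (χ t i < 0 ∨ Zi i)}
            = {t | χ t i < 0 ∨ Zi i} := by
          ext t; rw [Set.mem_setOf_eq, if_neg hsi]; rfl
        rw [hif]
        by_cases hz : Zi i
        · have : {t | χ t i < 0 ∨ Zi i} = Set.univ :=
            Set.eq_univ_of_forall (fun t => Or.inr hz)
          rw [this]; exact isOpen_univ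
        · have : {t | χ t i < 0 ∨ Zi i} = {t | χ t i < 0} := by
            ext t
            simp only [Set.mem_setOf_eq, or_iff_left hz]
          rw [this]; exact isOpen_lt (hχicont i) continuous_const
    -- D
    refine ⟨⋃ s, V s ∩ D' s, isOpen_iUnion fun s => (hVopen s).inter (hD'open s), ?_, ?_⟩
    · -- dense
      rw [dense_iff_inter_open]
      intro W hW hWne
      -- good set where each coordinate is nonzero or identically zero
      set G : Fin w → Set (Fin k → ℝ) :=
        fun i => {t | χ t i ≠ 0 ∨ Zi i} with hGdef
      have hGopen : ∀ i, IsOpen (G i) := by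
        intro i
        by_cases hz : Zi i
        · have : G i = Set.univ := Set.eq_univ_of_forall (fun t => Or.inr hz)
          rw [this]; exact isOpen_univ
        · have : G i = {t | χ t i ≠ 0} := by
            ext t; simp only [hGdef, Set.mem_setOf_eq, or_iff_left hz]
          rw [this]
          exact isOpen_ne_fun (hχicont i) continuous_const
      have hGdense : ∀ i, Dense (G i) := by
        intro i
        by_cases hz : Zi i
        · have : G i = Set.univ := Set.eq_univ_of_forall (fun t => Or.inr hz)
          rw [this]; exact dense_univ
        · rw [dense_iff_inter_open]
          intro W' hW' hW'ne
          by_contra hcon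
          push_neg at hcon
          rw [Set.eq_empty_iff_forall_notMem] at hcon
          have hzero : ∀ t ∈ W', (∑ j, M i j * t j) + c i = 0 := by
            intro t ht
            have := hcon t
            simp only [Set.mem_inter_iff, hGdef, Set.mem_setOf_eq] at this
            have h2 := not_and.mp this ht
            push_neg at h2
            rw [← hMc]
            exact h2.1
          exact hz ⟨(aff_coord_zero hW' hW'ne hzero).1, (aff_coord_zero hW' hW'ne hzero).2⟩
      have hD₀ : Dense (⋂ i, G i) := dense_iInter_of_isOpen hGopen hGdense
      obtain ⟨t, htW, htG⟩ := (dense_iff_inter_open.mp hD₀) W hW hWne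
      -- pattern of t
      set s : Fin w → Bool := fun i => decide (0 < χ t i) with hsdef
      have htV : t ∈ V s := by
        intro i
        by_cases hpos : 0 < χ t i
        · simp [hsdef, hpos]
        · simp only [hsdef, hpos, decide_eq_true_eq, if_neg, decide_false]
          rcases lt_or_eq_of_le (not_lt.mp hpos) with hlt | heq
          · exact Or.inl hlt
          · have := (Set.mem_iInter.mp htG) i
            simp only [hGdef, Set.mem_setOf_eq] at this
            rcases this with h1 | h2
            · exact absurd heq h1
            · exact Or.inr h2
      have : (W ∩ V s).Nonempty := ⟨t, htW, htV⟩
      obtain ⟨u, huWV, huD⟩ := (dense_iff_inter_open.mp (hD'dense s)) (W ∩ V s)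
        (hW.inter (hVopen s)) this
      exact ⟨u, huWV.1, Set.mem_iUnion.mpr ⟨s, huWV.2, huD⟩⟩
    · -- local property
      intro x hx
      obtain ⟨s, hxV, hxD⟩ := Set.mem_iUnion.mp hx
      obtain ⟨ψ', hψ'mem, U', hU'open, hxU', hU'eq⟩ := hD'prop s x hxD
      refine ⟨fun z => ψ' (patMap s (f₀ z)), ⟨⟨ψ', s⟩, ⟨hψ'mem, trivial⟩, rfl⟩,
        U' ∩ V s, hU'open.inter (hVopen s), ⟨hxU', hxV⟩, ?_⟩
      intro y ⟨hyU', hyV⟩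
      have hrelu : (fun i => relu (f₀ (φ y) i)) = patMap s (χ y) := by
        funext i
        have hyVi := hyV i
        simp only [patMap]
        by_cases hsi : s i
        · simp only [hsi, if_true] at hyVi ⊢
          exact max_eq_left (le_of_lt hyVi)
        · simp only [hsi, if_false] at hyVi ⊢
          rcases hyVi with hlt | hz
          · exact max_eq_right (le_of_lt hlt)
          · rw [show f₀ (φ y) i = χ y i from rfl, hZconst i hz y]
            exact max_eq_right le_rfl
      show g' (fun i => relu (f₀ (φ y) i)) = ψ' (patMap s (f₀ (φ y)))
      rw [hrelu]
      exact hU'eq y hyU'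

lemma null_hyperplane {m : ℕ} (v : Fin m → ℝ) (hv : v ≠ 0) :
    (volume : Measure (Fin m → ℝ)) {lam | (∑ i, lam i * v i) = 0} = 0 := by
  classical
  obtain ⟨i₀, hi₀⟩ : ∃ i₀, v i₀ ≠ 0 := by
    by_contra hc
    push_neg at hc
    exact hv (funext hc)
  set ℓ : (Fin m → ℝ) →ₗ[ℝ] ℝ :=
    { toFun := fun lam => ∑ i, lam i * v i
      map_add' := fun a b => by simp [add_mul, Finset.sum_add_distrib]
      map_smul' := fun r a => by simp [Finset.mul_sum, mul_assoc] } with hℓ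
  have hsub : {lam : Fin m → ℝ | (∑ i, lam i * v i) = 0}
      = (LinearMap.ker ℓ : Set (Fin m → ℝ)) := by
    ext lam
    simp [hℓ, LinearMap.mem_ker]
  rw [hsub]
  apply Measure.addHaar_submodule
  intro htop
  have : Pi.single i₀ (1:ℝ) ∈ LinearMap.ker ℓ := htop ▸ Submodule.mem_top
  rw [LinearMap.mem_ker] at this
  simp only [hℓ, LinearMap.coe_mk, AddHom.coe_mk] at this
  rw [Finset.sum_eq_single i₀ (fun j _ hj => by simp [Pi.single_apply, hj])
    (fun h => absurd (Finset.mem_univ i₀) h)] at this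
  simp [Pi.single_apply] at this
  exact hi₀ this

lemma exists_good_lambda {m : ℕ} (S : Set (Fin m → ℝ)) (hS : S.Finite)
    (h0 : ∀ v ∈ S, v ≠ 0) : ∃ lam : Fin m → ℝ, ∀ v ∈ S, (∑ i, lam i * v i) ≠ 0 := by
  by_contra hcon
  push_neg at hcon
  have hcover : (Set.univ : Set (Fin m → ℝ)) ⊆ ⋃ v ∈ S, {lam | (∑ i, lam i * v i) = 0} := by
    intro lam _
    obtain ⟨v, hv, hzero⟩ := hcon lam
    exact Set.mem_biUnion hv hzero
  have hnull : (volume : Measure (Fin m → ℝ)) (⋃ v ∈ S, {lam | (∑ i, lam i * v i) = 0}) = 0 := by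
    apply (measure_biUnion_null_iff hS.countable).mpr
    exact fun v hv => null_hyperplane v (h0 v hv)
  have huniv : (volume : Measure (Fin m → ℝ)) Set.univ = 0 :=
    le_antisymm (hnull ▸ measure_mono hcover) zero_le
  have hne : (volume : Measure (Fin m → ℝ)) Set.univ ≠ 0 := by
    have : (0:ENNReal) < volume (Set.univ : Set (Fin m → ℝ)) :=
      isOpen_univ.measure_pos volume Set.univ_nonempty
    exact this.ne'
  exact hne huniv

/-- Hard direction : from an `m`-output network, a `1`-output network with the same regions. -/
lemma exists_one_output {n : ℕ} {ws : List ℕ} {m : ℕ} {f : (Fin n → ℝ) → Fin m → ℝ}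
    (h : ComputesA relu n ws m f) :
    ∃ g : (Fin n → ℝ) → Fin 1 → ℝ, ComputesA relu n ws 1 g ∧ numRegions g = numRegions f := by
  classical
  have hcont : Continuous f := computes_continuous h
  obtain ⟨𝒜, h𝒜fin, h𝒜aff, hprop⟩ := key_candidates h
  obtain ⟨D, hDopen, hDdense, hDprop⟩ := hprop n (fun x => x) affine_id
  -- witnesses for distinct pairs of candidates
  set Pset : Set (((Fin n → ℝ) → Fin m → ℝ) × ((Fin n → ℝ) → Fin m → ℝ)) :=
    {p | p.1 ∈ 𝒜 ∧ p.2 ∈ 𝒜 ∧ p.1 ≠ p.2} with hPdef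
  have hPfin : Pset.Finite := by
    apply Set.Finite.subset (h𝒜fin.prod h𝒜fin)
    intro p hp
    exact ⟨hp.1, hp.2.1⟩
  have hwit : ∀ p ∈ Pset, ∃ x, p.1 x ≠ p.2 x := by
    intro p hp
    by_contra hc
    push_neg at hc
    exact hp.2.2 (funext hc)
  choose! pt hpt using hwit
  set S : Set (Fin m → ℝ) := (fun p : (((Fin n → ℝ) → Fin m → ℝ) × _) =>
    (fun i => p.1 (pt p) i - p.2 (pt p) i)) '' Pset with hSdef
  obtain ⟨lam, hlam⟩ : ∃ lam : Fin m → ℝ, ∀ v ∈ S, (∑ i, lam i * v i) ≠ 0 := by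
    apply exists_good_lambda S (hPfin.image _)
    rintro v ⟨p, hp, rfl⟩
    intro hzero
    have := hpt p hp
    apply this
    funext i
    have := congrFun hzero i
    simp only [Pi.zero_apply] at this
    linarith
  -- separation property
  have hsep : ∀ ψ₁ ∈ 𝒜, ∀ ψ₂ ∈ 𝒜,
      (∀ z, (∑ i, lam i * ψ₁ z i) = (∑ i, lam i * ψ₂ z i)) → ψ₁ = ψ₂ := by
    intro ψ₁ h₁ ψ₂ h₂ heq
    by_contra hne
    have hp : (ψ₁, ψ₂) ∈ Pset := ⟨h₁, h₂, hne⟩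
    apply hlam _ ⟨(ψ₁, ψ₂), hp, rfl⟩
    have := heq (pt (ψ₁, ψ₂))
    simp only [mul_sub, Finset.sum_sub_distrib]
    simpa [sub_eq_zero] using this
  -- the 1-output function
  set Λ : (Fin m → ℝ) → Fin 1 → ℝ := fun y _ => ∑ i, lam i * y i with hΛdef
  have hΛaff : IsAffineMap Λ := by
    refine ⟨fun _ i => lam i, fun _ => 0, fun y j => ?_⟩
    simp [hΛdef]
  refine ⟨fun x => Λ (f x), computes_postcomp h hΛaff, ?_⟩
  -- same regions
  have hiff : ∀ U : Set (Fin n → ℝ), IsOpen U →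
      ((∃ G, IsAffineMap G ∧ Set.EqOn (fun x => Λ (f x)) G U) ↔
       (∃ F, IsAffineMap F ∧ Set.EqOn f F U)) := by
    intro U hUopen
    constructor
    · rintro ⟨G, hGaff, hGeq⟩
      rcases U.eq_empty_or_nonempty with rfl | hUne
      · exact ⟨fun _ _ => 0, ⟨0, 0, by simp⟩, fun y hy => absurd hy (Set.notMem_empty y)⟩
      obtain ⟨x₀, hx₀U, hx₀D⟩ := hDdense.inter_open_nonempty U hUopen hUne
      obtain ⟨ψ, hψ𝒜, U₀, hU₀open, hx₀U₀, heq₀⟩ := hDprop x₀ hx₀D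
      -- Λ ∘ ψ' = G for the local candidate ψ' at any point of U ∩ D
      have hΛψG : ∀ x ∈ U ∩ D, ∀ ψ' ∈ 𝒜, ∀ U' : Set (Fin n → ℝ), IsOpen U' → x ∈ U' →
          (∀ y ∈ U', f y = ψ' y) → (fun z => Λ (ψ' z)) = G := by
        intro x hx ψ' hψ' U' hU'open hxU' heq'
        apply affine_eq_of_eqOn (affine_comp (h𝒜aff ψ' hψ') hΛaff) hGaff
          (hUopen.inter hU'open) ⟨x, hx.1, hxU'⟩
        intro y hy
        show Λ (ψ' y) = G y
        rw [← heq' y hy.2]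
        exact hGeq hy.1
      have hψG : (fun z => Λ (ψ z)) = G :=
        hΛψG x₀ ⟨hx₀U, hx₀D⟩ ψ hψ𝒜 U₀ hU₀open hx₀U₀ heq₀
      -- f = ψ on U ∩ D
      have hsubset : U ∩ D ⊆ {y | f y = ψ y} := by
        intro x hx
        obtain ⟨ψ', hψ'𝒜, U', hU'open, hxU', heq'⟩ := hDprop x hx.2
        have hψ'G : (fun z => Λ (ψ' z)) = G := hΛψG x hx ψ' hψ'𝒜 U' hU'open hxU' heq'
        have : ψ' = ψ := by
          apply hsep ψ' hψ'𝒜 ψ hψ𝒜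
          intro z
          have := congrFun (congrFun (hψ'G.trans hψG.symm) z) (0 : Fin 1)
          simpa [hΛdef] using this
        rw [Set.mem_setOf_eq, heq' x hxU', this]
      have hCclosed : IsClosed {y | f y = ψ y} :=
        isClosed_eq hcont (affine_continuous (h𝒜aff ψ hψ𝒜))
      have hUsub : U ⊆ {y | f y = ψ y} := by
        intro y hy
        have h1 : U ⊆ closure (U ∩ D) := hDdense.open_subset_closure_inter hUopen
        have h2 : closure (U ∩ D) ⊆ {y | f y = ψ y} :=
          hCclosed.closure_subset_iff.mpr hsubset
        exact h2 (h1 hy)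
      exact ⟨ψ, h𝒜aff ψ hψ𝒜, fun y hy => hUsub hy⟩
    · rintro ⟨F, hFaff, hFeq⟩
      refine ⟨fun x => Λ (F x), affine_comp hFaff hΛaff, fun y hy => ?_⟩
      show Λ (f y) = Λ (F y)
      rw [hFeq hy]
  unfold numRegions
  rw [regions_eq hiff]

/-- Easy direction : from a `1`-output network, an `m`-output network with the same regions. -/
lemma exists_m_output {n : ℕ} {ws : List ℕ} {m : ℕ} (hm : 0 < m)
    {g : (Fin n → ℝ) → Fin 1 → ℝ} (h : ComputesA relu n ws 1 g) :
    ∃ f : (Fin n → ℝ) → Fin m → ℝ, ComputesA relu n ws m f ∧ numRegions f = numRegions g := by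
  classical
  set i₀ : Fin m := ⟨0, hm⟩ with hi₀def
  set E : (Fin 1 → ℝ) → Fin m → ℝ := fun y i => if i = i₀ then y 0 else 0 with hEdef
  have hEaff : IsAffineMap E := by
    refine ⟨fun i _ => if i = i₀ then 1 else 0, fun _ => 0, fun y i => ?_⟩
    simp only [hEdef, Fin.sum_univ_one, add_zero]
    split <;> simp
  refine ⟨fun x => E (g x), computes_postcomp h hEaff, ?_⟩
  have hiff : ∀ U : Set (Fin n → ℝ), IsOpen U →
      ((∃ F, IsAffineMap F ∧ Set.EqOn (fun x => E (g x)) F U) ↔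
       (∃ G, IsAffineMap G ∧ Set.EqOn g G U)) := by
    intro U hUopen
    constructor
    · rintro ⟨F, hFaff, hFeq⟩
      obtain ⟨A, b, hA⟩ := hFaff
      refine ⟨fun x _ => F x i₀, ⟨fun _ k => A i₀ k, fun _ => b i₀, fun x j => hA x i₀⟩,
        fun x hx => ?_⟩
      funext j
      have hj : j = (0 : Fin 1) := Subsingleton.elim _ _
      have hfx := congrFun (hFeq hx) i₀
      simp only [hEdef, if_pos rfl] at hfx
      rw [hj]
      exact hfx
    · rintro ⟨G, hGaff, hGeq⟩
      refine ⟨fun x => E (G x), affine_comp hGaff hEaff, fun x hx => ?_⟩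
      show E (g x) = E (G x)
      rw [hGeq hx]
  unfold numRegions
  rw [regions_eq hiff]

/-- `R(n₀, …, n_L, m) = R(n₀, …, n_L, 1)`. -/
theorem stmt_0 (n₀ : ℕ) (hidden : List ℕ) (m : ℕ)
    (h₀ : 0 < n₀) (hh : ∀ w ∈ hidden, 0 < w) (hm : 0 < m) :
    maxRegions n₀ hidden m = maxRegions n₀ hidden 1 := by
  unfold maxRegions
  congr 1
  ext k
  simp only [Set.mem_setOf_eq]
  constructor
  · rintro ⟨f, hf, rfl⟩
    obtain ⟨g, hg, hnum⟩ := exists_one_output hf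
    exact ⟨g, hg, hnum⟩
  · rintro ⟨g, hg, rfl⟩
    obtain ⟨f, hf, hnum⟩ := exists_m_output hm hg
    exact ⟨f, hf, hnum⟩
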